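/- arXiv:1910.11666 — 8 statements merged into one kernel-verified Lean document; each statement's English description precedes it below -/
import Mathlib

section
/- Let Z be a set, let X be a subset of the power set of Z, and let a ∈ X and b ⊆ Z with a ⊄ b (i.e., a is not a subset of b). Suppose every nonempty subfamily S of X has a minimal element with respect to inclusion. Then there exists x ∈ X that is join-irreducible in X, with x ⊆ a and x ⊄ b. -/
/-- `x` is join-irreducible in the family `X`: it is nonempty and belongs to every
subfamily of `X` whose union it is. -/
def JoinIrred {Z : Type*} (X : Set (Set Z)) (x : Set Z) : Prop :=
  x.Nonempty ∧ ∀ F : Set (Set Z), F ⊆ X → x = ⋃₀ F → x ∈ F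

/-- if every nonempty subfamily of `X` has an inclusion-minimal element,
`a ∈ X` and `a ⊄ b`, then there is a join-irreducible `x ∈ X` with `x ⊆ a` and `x ⊄ b`. -/
theorem stmt4 {Z : Type*} (X : Set (Set Z)) (a b : Set Z)
    (hmin : ∀ S : Set (Set Z), S ⊆ X → S.Nonempty →
      ∃ m ∈ S, ∀ s ∈ S, s ⊆ m → s = m)
    (ha : a ∈ X) (hab : ¬ a ⊆ b) :
    ∃ x ∈ X, JoinIrred X x ∧ x ⊆ a ∧ ¬ x ⊆ b := by
  set S : Set (Set Z) := {x | x ∈ X ∧ x ⊆ a ∧ ¬ x ⊆ b} with hS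
  obtain ⟨m, hmS, hmmin⟩ := hmin S (fun x hx => hx.1) ⟨a, ha, subset_rfl, hab⟩
  obtain ⟨hmX, hma, hmb⟩ := hmS
  refine ⟨m, hmX, ⟨?_, ?_⟩, hma, hmb⟩
  · obtain ⟨z, hz⟩ := Set.not_subset.mp hmb
    exact ⟨z, hz.1⟩
  · intro F hF hmF
    obtain ⟨z, hzm, hzb⟩ := Set.not_subset.mp hmb
    rw [hmF] at hzm
    obtain ⟨f, hfF, hzf⟩ := hzm
    have hfm : f ⊆ m := hmF ▸ Set.subset_sUnion_of_mem hfF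
    have : f ∈ S := ⟨hF hfF, hfm.trans hma, fun h => hzb (h hzf)⟩
    have := hmmin f this hfm
    rwa [← this]
end

section
/- Let Z be a set and X a family of subsets of Z such that every nonempty subfamily of X has an inclusion-minimal element. Then every a ∈ X equals the union of the join-irreducible elements of X below it: a = ⋃{ x ∈ X | x is join-irreducible in X and x ⊆ a }. -/
/-- if every nonempty subfamily of `X` has an inclusion-minimal element,
then every `a ∈ X` is the union of the join-irreducibles of `X` below it. -/
theorem stmt5 {Z : Type*} (X : Set (Set Z))
    (hmin : ∀ S : Set (Set Z), S ⊆ X → S.Nonempty →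
      ∃ m ∈ S, ∀ s ∈ S, s ⊆ m → s = m) :
    ∀ a ∈ X, a = ⋃₀ {x | x ∈ X ∧ JoinIrred X x ∧ x ⊆ a} := by
  intro a ha
  apply Set.Subset.antisymm
  · intro z hz
    set S : Set (Set Z) := {x | x ∈ X ∧ z ∈ x ∧ x ⊆ a} with hS
    obtain ⟨m, hmS, hmmin⟩ := hmin S (fun x hx => hx.1) ⟨a, ha, hz, subset_rfl⟩
    refine Set.mem_sUnion.2 ⟨m, ⟨hmS.1, ⟨⟨z, hmS.2.1⟩, ?_⟩, hmS.2.2⟩, hmS.2.1⟩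
    intro F hF hmF
    have hzF : z ∈ ⋃₀ F := hmF ▸ hmS.2.1
    obtain ⟨f, hfF, hzf⟩ := hzF
    have hfm : f ⊆ m := hmF ▸ Set.subset_sUnion_of_mem hfF
    have : f = m := hmmin f ⟨hF hfF, hzf, hfm.trans hmS.2.2⟩ hfm
    exact this ▸ hfF
  · intro z hz
    obtain ⟨x, hx, hzx⟩ := hz
    exact hx.2.2 hzx
end

section
/- Let Z be a set, Y ⊆ X ⊆ 𝒫(Z) families of subsets of Z, and suppose every element of X is a union of join-irreducible elements of Y (i.e., X is contained in the closure of JI(Y) under arbitrary unions). Then the join-irreducible elements of Y coincide with the join-irreducible elements of X: JI(Y) = JI(X). -/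
/-- if `Y ⊆ X` and every element of `X` is a union of join-irreducibles of `Y`,
then the join-irreducibles of `Y` and of `X` coincide. -/
theorem stmt6 {Z : Type*} (Y X : Set (Set Z)) (hYX : Y ⊆ X)
    (hgen : ∀ a ∈ X, ∃ F : Set (Set Z),
      F ⊆ {y | y ∈ Y ∧ JoinIrred Y y} ∧ a = ⋃₀ F) :
    {y | y ∈ Y ∧ JoinIrred Y y} = {x | x ∈ X ∧ JoinIrred X x} := by
  ext y
  simp only [Set.mem_setOf_eq]
  constructor
  · rintro ⟨hyY, hne, hirr⟩
    refine ⟨hYX hyY, hne, ?_⟩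
    intro F hFX hyF
    -- build the combined family G of join-irreducible pieces
    set G : Set (Set Z) :=
      {s | ∃ a ∈ F, ∃ Fa : Set (Set Z),
        Fa ⊆ {y | y ∈ Y ∧ JoinIrred Y y} ∧ a = ⋃₀ Fa ∧ s ∈ Fa} with hG
    have hGY : G ⊆ Y := by
      rintro s ⟨a, _, Fa, hFa, _, hsFa⟩
      exact (hFa hsFa).1
    have hyG : y = ⋃₀ G := by
      apply Set.Subset.antisymm
      · rw [hyF]
        rintro z ⟨a, haF, hza⟩
        obtain ⟨Fa, hFa, haFa⟩ := hgen a (hFX haF)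
        rw [haFa] at hza
        obtain ⟨s, hsFa, hzs⟩ := hza
        exact ⟨s, ⟨a, haF, Fa, hFa, haFa, hsFa⟩, hzs⟩
      · rintro z ⟨s, ⟨a, haF, Fa, _, haFa, hsFa⟩, hzs⟩
        rw [hyF]
        exact ⟨a, haF, haFa ▸ Set.subset_sUnion_of_mem hsFa hzs⟩
    obtain ⟨a, haF, Fa, _, haFa, hyFa⟩ := hirr G hGY hyG
    have h1 : y ⊆ a := haFa ▸ Set.subset_sUnion_of_mem hyFa
    have h2 : a ⊆ y := hyF ▸ Set.subset_sUnion_of_mem haF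
    have : a = y := Set.Subset.antisymm h2 h1
    exact this ▸ haF
  · rintro ⟨hxX, hne, hirr⟩
    obtain ⟨F, hF, hxF⟩ := hgen y hxX
    have : y ∈ F := hirr F (fun s hs => hYX (hF hs).1) hxF
    exact hF this
end

section
/- Let A = (Σ, Q, I, F, δ) be a nondeterministic automaton (possibly with infinite state set) such that every state q accepts a derivative of L(A), i.e., for each q there is a word w with L(q) = w⁻¹L(A). If I = ∅, then L(A) = ∅; if I ≠ ∅, every state is final, and δ(q,a) ≠ ∅ for all q ∈ Q and a ∈ Σ, then L(A) = Σ*. -/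
/-- A nondeterministic automaton with alphabet `σ` and state set `Q`. -/
structure NA (σ Q : Type*) where
  I : Set Q
  F : Set Q
  δ : Q → σ → Set Q

/-- Acceptance of a word from a state. -/
def NA.Acc {σ Q : Type*} (A : NA σ Q) : List σ → Q → Prop
  | [], q => q ∈ A.F
  | a :: w, q => ∃ q' ∈ A.δ q a, A.Acc w q'

/-- The language accepted from a state. -/
def NA.stateLang {σ Q : Type*} (A : NA σ Q) (q : Q) : Set (List σ) :=
  {w | A.Acc w q}

/-- The language accepted by the automaton. -/
def NA.lang {σ Q : Type*} (A : NA σ Q) : Set (List σ) :=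
  {w | ∃ q ∈ A.I, A.Acc w q}

/-- The derivative of a language with respect to a word: `u⁻¹L = {w | uw ∈ L}`. -/
def lderiv {σ : Type*} (L : Set (List σ)) (u : List σ) : Set (List σ) :=
  {w | u ++ w ∈ L}

/-- for a residual automaton (every state language is a derivative of the
accepted language): if `I = ∅` then `L(A) = ∅`; and if `I ≠ ∅`, every state is final, and
every state has an `a`-successor for every letter `a`, then `L(A) = Σ*`. -/
theorem stmt9 {σ Q : Type*} (A : NA σ Q)
    (hres : ∀ q : Q, ∃ w : List σ, A.stateLang q = lderiv A.lang w) :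
    (A.I = ∅ → A.lang = ∅) ∧
    ((A.I.Nonempty ∧ (∀ q : Q, q ∈ A.F) ∧ ∀ (q : Q) (a : σ), (A.δ q a).Nonempty) →
      A.lang = Set.univ) := by
  constructor
  · intro h
    ext w
    simp [NA.lang, h]
  · rintro ⟨⟨q0, hq0⟩, hF, hδ⟩
    have key : ∀ (w : List σ) (q : Q), A.Acc w q := by
      intro w
      induction w with
      | nil => intro q; exact hF q
      | cons a w ih =>
        intro q
        obtain ⟨q', hq'⟩ := hδ q a
        exact ⟨q', hq', ih q'⟩
    ext w
    simp only [Set.mem_univ, iff_true]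
    exact ⟨q0, hq0, key w q0⟩
end

section
/- Let L ⊆ Σ* and suppose J := JI(Res(L)), the set of join-irreducible derivatives of L, generates Res(L) under unions. Define an automaton with states Q = J, initial states I = { x ∈ Q | x ⊆ L }, final states F = { x ∈ Q | ε ∈ x }, and transitions δ(x, a) = { y ∈ Q | y ⊆ a⁻¹x } for x = w⁻¹L (i.e., y ∈ δ(w⁻¹L, a) iff y ⊆ (wa)⁻¹L). Then every state x ∈ Q accepts exactly the language x, and the automaton accepts L. -/
/-- The set of derivatives of `L`. -/
def Res {σ : Type*} (L : Set (List σ)) : Set (Set (List σ)) :=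
  {D | ∃ w : List σ, D = lderiv L w}

/-- The join-irreducible derivatives of `L`. -/
def JIRes {σ : Type*} (L : Set (List σ)) : Set (Set (List σ)) :=
  {x | x ∈ Res L ∧ JoinIrred (Res L) x}

/-- The canonical residual automaton of `L`: states are (join-irreducible) derivatives. -/
def canonRes {σ : Type*} (L : Set (List σ)) : NA σ (Set (List σ)) where
  I := {x | x ∈ JIRes L ∧ x ⊆ L}
  F := {x | x ∈ JIRes L ∧ [] ∈ x}
  δ := fun x a => {y | y ∈ JIRes L ∧ y ⊆ lderiv x [a]}

/-- if the join-irreducible derivatives generate all derivatives of `L`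
under unions, then in the canonical residual automaton every state `x` accepts exactly
the language `x`, and the automaton accepts `L`. -/
theorem stmt12 {σ : Type*} (L : Set (List σ))
    (hgen : ∀ D ∈ Res L, ∃ F : Set (Set (List σ)), F ⊆ JIRes L ∧ D = ⋃₀ F) :
    (∀ x ∈ JIRes L, (canonRes L).stateLang x = x) ∧ (canonRes L).lang = L := by
  have key : ∀ w : List σ, ∀ x ∈ JIRes L, (canonRes L).Acc w x ↔ w ∈ x := by
    intro w
    induction w with
    | nil =>
      intro x hx
      simp [NA.Acc, canonRes, hx]
    | cons a w ih =>
      intro x hx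
      constructor
      · rintro ⟨y, ⟨hy, hsub⟩, hacc⟩
        exact hsub ((ih y hy).mp hacc)
      · intro hax
        obtain ⟨⟨u, hu⟩, _⟩ := hx
        have hres : lderiv x [a] ∈ Res L := by
          refine ⟨u ++ [a], ?_⟩
          ext v
          simp [hu, lderiv, List.append_assoc]
        obtain ⟨F, hF, hEq⟩ := hgen _ hres
        have hw : w ∈ lderiv x [a] := hax
        rw [hEq] at hw
        obtain ⟨y, hyF, hwy⟩ := hw
        refine ⟨y, ⟨hF hyF, ?_⟩, (ih y (hF hyF)).mpr hwy⟩
        rw [hEq]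
        exact Set.subset_sUnion_of_mem hyF
  constructor
  · intro x hx
    ext w
    exact key w x hx
  · have hLres : L ∈ Res L := ⟨[], by ext v; simp [lderiv]⟩
    obtain ⟨F, hF, hEq⟩ := hgen _ hLres
    ext w
    constructor
    · rintro ⟨x, ⟨hx, hxL⟩, hacc⟩
      exact hxL ((key w x hx).mp hacc)
    · intro hw
      rw [hEq] at hw
      obtain ⟨x, hxF, hwx⟩ := hw
      refine ⟨x, ⟨hF hxF, ?_⟩, (key w x (hF hxF)).mpr hwx⟩
      rw [hEq]
      exact Set.subset_sUnion_of_mem hxF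
end

section
/- Consider the language L_n = { wa ∈ 𝔸* | a ∈ 𝔸 does not occur in w } ∪ {ε} over an infinite alphabet 𝔸. Then for every letter a, the derivative a⁻¹L_n equals the union ⋃_{b ≠ a} (ab)⁻¹L_n, and hence a⁻¹L_n is not join-irreducible in Res(L_n). -/
/-- The language "the last letter is unique": `{wa | a does not occur in w} ∪ {ε}`. -/
def Ln (𝔸 : Type*) : Set (List 𝔸) :=
  {x | ∃ (w : List 𝔸) (a : 𝔸), x = w ++ [a] ∧ a ∉ w} ∪ {[]}

lemma concat_inj' {α : Type*} {x y : List α} {c d : α} (h : x ++ [c] = y ++ [d]) :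
    x = y ∧ c = d := by
  obtain ⟨h1, h2⟩ := List.append_inj' h rfl
  exact ⟨h1, by simpa using h2⟩

/-- over an infinite alphabet, `a⁻¹Lₙ = ⋃_{b ≠ a} (ab)⁻¹Lₙ`, and hence
`a⁻¹Lₙ` is not join-irreducible in `Res Lₙ`. -/
theorem stmt13 {𝔸 : Type*} [Infinite 𝔸] (a : 𝔸) :
    lderiv (Ln 𝔸) [a] = ⋃₀ {D | ∃ b : 𝔸, b ≠ a ∧ D = lderiv (Ln 𝔸) [a, b]} ∧
      ¬ JoinIrred (Res (Ln 𝔸)) (lderiv (Ln 𝔸) [a]) := by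
  classical
  have key : lderiv (Ln 𝔸) [a] = ⋃₀ {D | ∃ b : 𝔸, b ≠ a ∧ D = lderiv (Ln 𝔸) [a, b]} := by
    ext w
    simp only [lderiv, Set.mem_setOf_eq, Set.mem_sUnion]
    constructor
    · intro hw
      obtain ⟨b, hb⟩ := Infinite.exists_notMem_finset (a :: w).toFinset
      rw [List.mem_toFinset, List.mem_cons, not_or] at hb
      refine ⟨lderiv (Ln 𝔸) [a, b], ⟨b, hb.1, rfl⟩, ?_⟩
      rcases List.eq_nil_or_concat w with rfl | ⟨v, c, rfl⟩
      · exact Or.inl ⟨[a], b, rfl, by simpa using hb.1⟩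
      · rcases hw with ⟨u, d, heq, hd⟩ | heq
        · have heq' : (a :: v) ++ [c] = u ++ [d] := by simpa using heq
          obtain ⟨rfl, rfl⟩ := concat_inj' heq'
          refine Or.inl ⟨a :: b :: v, c, by simp, ?_⟩
          simp only [List.mem_cons, not_or] at hd ⊢
          have hbd : b ≠ c := fun h => hb.2 (by simp [h])
          exact ⟨hd.1, fun h => hbd h.symm, hd.2⟩
        · simp at heq
    · rintro ⟨D, ⟨b, hba, rfl⟩, hw⟩
      rcases List.eq_nil_or_concat w with rfl | ⟨v, c, rfl⟩
      · exact Or.inl ⟨[], a, rfl, by simp⟩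
      · rcases hw with ⟨u, d, heq, hd⟩ | heq
        · have heq' : (a :: b :: v) ++ [c] = u ++ [d] := by simpa using heq
          obtain ⟨rfl, rfl⟩ := concat_inj' heq'
          simp only [List.mem_cons, not_or] at hd
          exact Or.inl ⟨a :: v, c, by simp, by
            simp only [List.mem_cons, not_or]; exact ⟨hd.1, hd.2.2⟩⟩
        · simp at heq
  refine ⟨key, ?_⟩
  rintro ⟨-, h⟩
  have hF : {D | ∃ b : 𝔸, b ≠ a ∧ D = lderiv (Ln 𝔸) [a, b]} ⊆ Res (Ln 𝔸) := by
    rintro D ⟨b, -, rfl⟩; exact ⟨[a, b], rfl⟩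
  obtain ⟨b, hba, heq⟩ := h _ hF key
  have hmem : [b] ∈ lderiv (Ln 𝔸) [a] := Or.inl ⟨[a], b, rfl, by simpa using hba⟩
  rw [heq] at hmem
  rcases hmem with ⟨u, d, hu, hd⟩ | hu
  · have : [a, b] ++ [b] = u ++ [d] := by simpa using hu
    obtain ⟨rfl, rfl⟩ := concat_inj' this
    simp at hd
  · simp [lderiv] at hu
end

section
/- For the language L_n = { wa ∈ 𝔸* | a does not occur in w } ∪ {ε} over an infinite alphabet 𝔸, and distinct letters a₁, …, a_k, the derivatives form a strictly decreasing chain: L_n ⊋ a₁⁻¹L_n ⊋ (a₁a₂)⁻¹L_n ⊋ ⋯ ⊋ (a₁⋯a_k)⁻¹L_n. -/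
/-- Every duplicate-free list belongs to `Ln`. -/
lemma nodup_mem_Ln {𝔸 : Type*} {x : List 𝔸} (hx : x.Nodup) : x ∈ Ln 𝔸 := by
  rcases x.eq_nil_or_concat with rfl | ⟨w, a, rfl⟩
  · exact Or.inr rfl
  · rw [List.concat_eq_append] at hx ⊢
    refine Or.inl ⟨w, a, rfl, ?_⟩
    rw [List.nodup_append] at hx
    intro ha
    exact hx.2.2 a ha a (by simp) rfl

/-- for pairwise distinct letters `a₁, …, a_k` (given as a duplicate-free
list `l`), the derivatives form a strictly decreasing chain
`Lₙ ⊋ a₁⁻¹Lₙ ⊋ (a₁a₂)⁻¹Lₙ ⊋ ⋯ ⊋ (a₁⋯a_k)⁻¹Lₙ`. -/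
theorem stmt14 {𝔸 : Type*} [Infinite 𝔸] (l : List 𝔸) (hl : l.Nodup) :
    ∀ i < l.length, lderiv (Ln 𝔸) (l.take (i + 1)) ⊂ lderiv (Ln 𝔸) (l.take i) := by
  intro i hi
  set a : 𝔸 := l.get ⟨i, hi⟩ with ha
  have hta : l.take (i + 1) = l.take i ++ [a] := by
    rw [List.take_succ]
    simp [List.getElem?_eq_getElem hi, ha]
  have hnd1 : (l.take (i + 1)).Nodup := hl.sublist (List.take_sublist _ _)
  have hani : a ∉ l.take i := by
    rw [hta, List.nodup_append] at hnd1
    intro h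
    exact hnd1.2.2 a h a (by simp) rfl
  constructor
  · -- subset
    intro w hw
    rcases w.eq_nil_or_concat with rfl | ⟨w', b, rfl⟩
    · -- w = []: take (i+1) ∈ Ln, and take i is nodup hence in Ln
      simp only [lderiv, Set.mem_setOf_eq, List.append_nil]
      exact nodup_mem_Ln (hl.sublist (List.take_sublist _ _))
    · rw [List.concat_eq_append] at hw ⊢
      rcases hw with ⟨v, c, heq, hc⟩ | hw
      · have heq' : (l.take (i + 1) ++ w') ++ [b] = v ++ [c] := by
          simpa [List.append_assoc] using heq
        obtain ⟨hv, hbc⟩ := List.append_inj' heq' rfl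
        have hbc' : b = c := by simpa using hbc
        subst hbc' hv
        refine Or.inl ⟨l.take i ++ w', b, by simp, ?_⟩
        intro hmem
        apply hc
        rw [hta]
        rcases List.mem_append.mp hmem with h | h
        · exact List.mem_append.mpr (Or.inl (List.mem_append.mpr (Or.inl h)))
        · exact List.mem_append.mpr (Or.inr h)
      · exfalso
        have : l.take (i + 1) ++ (w' ++ [b]) ≠ [] := by simp
        exact this hw
  · -- strictness: [a] separates
    intro hsub
    have hmem : [a] ∈ lderiv (Ln 𝔸) (l.take i) :=
      Or.inl ⟨l.take i, a, rfl, hani⟩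
    have hmem' := hsub hmem
    rcases hmem' with ⟨v, c, heq, hc⟩ | h
    · obtain ⟨hv, hbc⟩ := List.append_inj' heq rfl
      have : a = c := by simpa using hbc
      subst this hv
      exact hc (by rw [hta]; simp)
    · simp [lderiv] at h
end

section
/- Let T = (S, E) be an observation table for a target language L ⊆ Σ*, with row function row(s) = { e ∈ E | se ∈ L }, and suppose the constructed hypothesis automaton A(T) has states Q = join-irreducible rows among { row(s) | s ∈ S }, final states F = { r ∈ Q | ε ∈ r }, and transitions δ(row(s), a) = { r' ∈ Q | r' ⊆ row(sa) }. If E contains ε and is suffix-closed, and T is join-closed (every row(sa) is the union of the join-irreducible rows below it), then for every s ∈ S whose row is a state, the language accepted from state row(s), intersected with E, equals row(s): L(row(s)) ∩ E = row(s). -/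
/-- The row of `s` in the observation table `(S, E)` for the target language `L`. -/
def row {σ : Type*} (L : Set (List σ)) (E : Set (List σ)) (s : List σ) : Set (List σ) :=
  {e | e ∈ E ∧ s ++ e ∈ L}

/-- The set of rows of the table. -/
def Rows {σ : Type*} (L S E : Set (List σ)) : Set (Set (List σ)) :=
  {r | ∃ s ∈ S, r = row L E s}

/-- The states of the hypothesis automaton: join-irreducible rows. -/
def QRows {σ : Type*} (L S E : Set (List σ)) : Set (Set (List σ)) :=
  {r | r ∈ Rows L S E ∧ JoinIrred (Rows L S E) r}

/-- The hypothesis automaton constructed from the observation table `(S, E)`: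
states are the join-irreducible rows, a row is final iff it contains `ε`, and
`δ(row s, a) = { r' ∈ Q | r' ⊆ row (s a) }`. -/
def hypAut {σ : Type*} (L S E : Set (List σ)) : NA σ (Set (List σ)) where
  I := ∅
  F := {r | r ∈ QRows L S E ∧ [] ∈ r}
  δ := fun r a => {r' | r' ∈ QRows L S E ∧ ∃ s ∈ S, row L E s = r ∧ r' ⊆ row L E (s ++ [a])}

/-- if `ε ∈ E`, `E` is suffix-closed, and the table is join-closed (every
`row (s a)` is the union of the join-irreducible rows below it), then for every `s ∈ S`
whose row is a state of the hypothesis automaton, the language accepted from that state,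
intersected with `E`, equals `row s`. -/
theorem stmt19 {σ : Type*} (L S E : Set (List σ))
    (hE0 : [] ∈ E)
    (hEsuf : ∀ e ∈ E, ∀ u : List σ, u <:+ e → u ∈ E)
    (hclosed : ∀ s ∈ S, ∀ a : σ,
      row L E (s ++ [a]) = ⋃₀ {r | r ∈ QRows L S E ∧ r ⊆ row L E (s ++ [a])}) :
    ∀ s ∈ S, row L E s ∈ QRows L S E →
      (hypAut L S E).stateLang (row L E s) ∩ E = row L E s := by

  suffices h : ∀ e : List σ, ∀ s ∈ S, row L E s ∈ QRows L S E →
      ((hypAut L S E).Acc e (row L E s) ∧ e ∈ E ↔ e ∈ row L E s) by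
    intro s hs hQ
    ext e
    exact h e s hs hQ
  intro e
  induction e with
  | nil =>
    intro s hs hQ
    constructor
    · rintro ⟨hacc, _⟩
      exact hacc.2
    · intro hr
      exact ⟨⟨hQ, hr⟩, hr.1⟩
  | cons a w ih =>
    intro s hs hQ
    constructor
    · rintro ⟨⟨r', ⟨hr'Q, s', hs', hrow, hsub⟩, hacc⟩, hE⟩
      obtain ⟨t, ht, rfl⟩ := hr'Q.1
      have hwE : w ∈ E := hEsuf _ hE w ⟨[a], rfl⟩
      have hw : w ∈ row L E t := (ih t ht hr'Q).1 ⟨hacc, hwE⟩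
      have hmem : w ∈ row L E (s' ++ [a]) := hsub hw
      have : (a :: w) ∈ row L E s' := ⟨hE, by simpa [List.append_assoc] using hmem.2⟩
      rw [hrow] at this
      exact this
    · intro hr
      have hwE : w ∈ E := hEsuf _ hr.1 w ⟨[a], rfl⟩
      have hw : w ∈ row L E (s ++ [a]) :=
        ⟨hwE, by simpa [List.append_assoc] using hr.2⟩
      rw [hclosed s hs a] at hw
      obtain ⟨r', ⟨hr'Q, hsub⟩, hwr'⟩ := hw
      obtain ⟨t, ht, rfl⟩ := hr'Q.1
      have hacc : (hypAut L S E).Acc w (row L E t) := ((ih t ht hr'Q).2 hwr').1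
      exact ⟨⟨row L E t, ⟨hr'Q, s, hs, rfl, hsub⟩, hacc⟩, hr.1⟩
end
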